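/- Let f(z) = ∑_{k=0}^∞ a_k z^k be analytic on the open unit disk D with |f(z)| < 1 for all z ∈ D. Then for every z ∈ D with |z| = r ≤ √5 - 2 one has |f(z)| + ∑_{k=1}^∞ |a_k| r^k ≤ 1; i.e., the Bohr–Rogosinski radius for N = 1 equals R_1 = √5 - 2. -/

import Mathlib

open Metric Set Filter Complex
open scoped ENNReal NNReal

private lemma eball_one : Metric.eball (0:ℂ) (1:ℝ≥0∞) = ball (0:ℂ) 1 := by
  rw [show ((1 : ℝ≥0∞)) = ((1 : ℝ≥0) : ℝ≥0∞) by norm_num, Metric.emetric_ball_nnreal,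
    NNReal.coe_one]

private lemma mobius_denom_ne {w v : ℂ} (hw : ‖w‖ < 1) (hv : ‖v‖ < 1) :
    1 - (starRingEnd ℂ) w * v ≠ 0 := by
  intro h
  have h1 : (starRingEnd ℂ) w * v = 1 := by linear_combination -h
  have : ‖(starRingEnd ℂ) w * v‖ = 1 := by rw [h1]; simp
  rw [norm_mul, Complex.norm_conj] at this
  nlinarith [norm_nonneg w, norm_nonneg v]

private lemma mobius_lt_one {w v : ℂ} (hw : ‖w‖ < 1) (hv : ‖v‖ < 1) :
    ‖(v - w) / (1 - (starRingEnd ℂ) w * v)‖ < 1 := by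
  have h1 : w.re ^ 2 + w.im ^ 2 < 1 := by
    have := Complex.sq_norm w; rw [Complex.normSq_apply] at this; nlinarith [norm_nonneg w]
  have h2 : v.re ^ 2 + v.im ^ 2 < 1 := by
    have := Complex.sq_norm v; rw [Complex.normSq_apply] at this; nlinarith [norm_nonneg v]
  have key : Complex.normSq (v - w) < Complex.normSq (1 - (starRingEnd ℂ) w * v) := by
    simp only [Complex.normSq_apply, Complex.sub_re, Complex.sub_im, Complex.mul_re,
      Complex.mul_im, Complex.one_re, Complex.one_im, Complex.conj_re, Complex.conj_im]
    nlinarith [mul_pos (by nlinarith : (0:ℝ) < 1 - (w.re ^ 2 + w.im ^ 2))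
      (by nlinarith : (0:ℝ) < 1 - (v.re ^ 2 + v.im ^ 2))]
  rw [← Complex.sq_norm, ← Complex.sq_norm] at key
  have habs : ‖v - w‖ < ‖1 - (starRingEnd ℂ) w * v‖ :=
    lt_of_pow_lt_pow_left₀ 2 (norm_nonneg _) key
  rw [norm_div, div_lt_one (lt_of_le_of_lt (norm_nonneg _) habs)]
  exact habs

private lemma mobius_diff {g : ℂ → ℂ} (hd : DifferentiableOn ℂ g (ball (0:ℂ) 1))
    (hm : MapsTo g (ball (0:ℂ) 1) (ball (0:ℂ) 1)) {w : ℂ} (hw : ‖w‖ < 1) :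
    DifferentiableOn ℂ (fun ζ => (g ζ - w) / (1 - (starRingEnd ℂ) w * g ζ)) (ball (0:ℂ) 1) := by
  apply DifferentiableOn.div
  · exact hd.sub_const w
  · exact (differentiableOn_const _).sub ((differentiableOn_const _).mul hd)
  · intro ζ hζ
    exact mobius_denom_ne hw (mem_ball_zero_iff.1 (hm hζ))

private lemma mobius_mapsTo {g : ℂ → ℂ}
    (hm : MapsTo g (ball (0:ℂ) 1) (ball (0:ℂ) 1)) {w : ℂ} (hw : ‖w‖ < 1) :
    MapsTo (fun ζ => (g ζ - w) / (1 - (starRingEnd ℂ) w * g ζ)) (ball (0:ℂ) 1) (ball (0:ℂ) 1) := by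
  intro ζ hζ
  exact mem_ball_zero_iff.2 (mobius_lt_one hw (mem_ball_zero_iff.1 (hm hζ)))

/-- Schwarz–Pick, value form. -/
private lemma sp_value {g : ℂ → ℂ} (hd : DifferentiableOn ℂ g (ball (0:ℂ) 1))
    (hm : MapsTo g (ball (0:ℂ) 1) (ball (0:ℂ) 1)) {z : ℂ} (hz : z ∈ ball (0:ℂ) 1) :
    ‖g z - g 0‖ ≤ ‖z‖ * ‖1 - (starRingEnd ℂ) (g 0) * g z‖ := by
  have h0 : (0:ℂ) ∈ ball (0:ℂ) 1 := mem_ball_self one_pos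
  have hw : ‖g 0‖ < 1 := mem_ball_zero_iff.1 (hm h0)
  set w := g 0 with hwdef
  set φ : ℂ → ℂ := fun ζ => (g ζ - w) / (1 - (starRingEnd ℂ) w * g ζ) with hφ
  have hφ0 : φ 0 = 0 := by simp [hφ, hwdef]
  have hsch := Complex.norm_le_norm_of_mapsTo_ball (mobius_diff hd hm hw)
    ((mobius_mapsTo hm hw).mono_right ball_subset_closedBall) hφ0 (mem_ball_zero_iff.1 hz)
  have hden : 0 < ‖1 - (starRingEnd ℂ) w * g z‖ :=
    norm_pos_iff.2 (mobius_denom_ne hw (mem_ball_zero_iff.1 (hm hz)))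
  rw [norm_div, div_le_iff₀ hden] at hsch
  exact hsch

/-- Schwarz–Pick, derivative-at-zero form. -/
private lemma sp_deriv {g : ℂ → ℂ} (hd : DifferentiableOn ℂ g (ball (0:ℂ) 1))
    (hm : MapsTo g (ball (0:ℂ) 1) (ball (0:ℂ) 1)) :
    ‖deriv g 0‖ ≤ 1 - ‖g 0‖ ^ 2 := by
  have h0 : (0:ℂ) ∈ ball (0:ℂ) 1 := mem_ball_self one_pos
  have hw : ‖g 0‖ < 1 := mem_ball_zero_iff.1 (hm h0)
  set w := g 0 with hwdef
  set φ : ℂ → ℂ := fun ζ => (g ζ - w) / (1 - (starRingEnd ℂ) w * g ζ) with hφ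
  have hφ0 : φ 0 = 0 := by simp [hφ, hwdef]
  have hsch := Complex.norm_deriv_le_one_of_mapsTo_ball (mobius_diff hd hm hw)
    (by rw [show (g 0 - w) / (1 - (starRingEnd ℂ) w * g 0) = 0 from hφ0]; exact (mobius_mapsTo hm hw).mono_right ball_subset_closedBall) one_pos
  -- compute deriv φ 0
  have hgd : DifferentiableAt ℂ g 0 := hd.differentiableAt (ball_mem_nhds _ one_pos)
  have hg' : HasDerivAt g (deriv g 0) 0 := hgd.hasDerivAt
  have hu : HasDerivAt (fun ζ => g ζ - w) (deriv g 0) 0 := hg'.sub_const w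
  have hv : HasDerivAt (fun ζ => 1 - (starRingEnd ℂ) w * g ζ)
      (-((starRingEnd ℂ) w * deriv g 0)) 0 := (hg'.const_mul ((starRingEnd ℂ) w)).const_sub 1
  have hvne : 1 - (starRingEnd ℂ) w * g 0 ≠ 0 := mobius_denom_ne hw hw
  have hdφ : HasDerivAt φ ((deriv g 0 * (1 - (starRingEnd ℂ) w * g 0) -
      (g 0 - w) * -((starRingEnd ℂ) w * deriv g 0)) / (1 - (starRingEnd ℂ) w * g 0) ^ 2) 0 :=
    hu.div hv hvne
  have hsimp : (deriv g 0 * (1 - (starRingEnd ℂ) w * g 0) -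
      (g 0 - w) * -((starRingEnd ℂ) w * deriv g 0)) / (1 - (starRingEnd ℂ) w * g 0) ^ 2
      = deriv g 0 / (1 - (Complex.normSq w : ℂ)) := by
    have hnsq : (starRingEnd ℂ) w * w = (Complex.normSq w : ℂ) := by
      rw [mul_comm, Complex.mul_conj]
    have hne' : (1 - (Complex.normSq w : ℂ)) ≠ 0 := by rw [← hnsq]; exact hvne
    rw [← hwdef, sub_self, zero_mul, sub_zero, hnsq]
    field_simp
  have hderiv : deriv φ 0 = deriv g 0 / (1 - (Complex.normSq w : ℂ)) := by
    rw [hdφ.deriv, hsimp]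
  have hsch' : ‖deriv φ 0‖ ≤ 1 := hsch
  rw [hderiv, norm_div] at hsch'
  have hcast : (1 - (Complex.normSq w : ℂ)) = ((1 - Complex.normSq w : ℝ) : ℂ) := by
    push_cast; ring
  have hsqlt : Complex.normSq w < 1 := by
    have := Complex.sq_norm w
    nlinarith [norm_nonneg w]
  have habs : ‖1 - (Complex.normSq w : ℂ)‖ = 1 - Complex.normSq w := by
    rw [hcast, Complex.norm_real, Real.norm_eq_abs, abs_of_pos (by linarith)]
  rw [habs, div_le_one (by linarith)] at hsch'
  calc ‖deriv g 0‖ ≤ 1 - Complex.normSq w := hsch'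
    _ = 1 - ‖w‖ ^ 2 := by rw [Complex.sq_norm]

private lemma aux_radius {b : ℕ → ℂ}
    (hb : ∀ ρ : ℝ, 0 ≤ ρ → ρ < 1 → ∃ C, ∀ m, ‖b m‖ * ρ ^ m ≤ C) :
    1 ≤ (FormalMultilinearSeries.ofScalars ℂ b).radius := by
  apply ENNReal.le_of_forall_nnreal_lt
  intro ρ hρ
  have hρ1 : (ρ : ℝ) < 1 := by exact_mod_cast hρ
  obtain ⟨C, hC⟩ := hb ρ ρ.coe_nonneg hρ1
  apply FormalMultilinearSeries.le_radius_of_bound _ C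
  intro n
  rw [FormalMultilinearSeries.ofScalars_norm]
  simpa using hC n

private lemma wiener {f : ℂ → ℂ} {a : ℕ → ℂ}
    (hsum : ∀ z ∈ ball (0:ℂ) 1, HasSum (fun n : ℕ => a n * z ^ n) (f z))
    (hbound : ∀ z ∈ ball (0:ℂ) 1, ‖f z‖ < 1)
    (k : ℕ) (hk : 1 ≤ k) :
    ‖a k‖ ≤ 1 - ‖a 0‖ ^ 2 := by
  have hk0 : (k : ℝ) ≠ 0 := Nat.cast_ne_zero.2 (by omega)
  have hkpos : 0 < (k : ℝ) := by positivity
  have hkC : (k : ℂ) ≠ 0 := Nat.cast_ne_zero.2 (by omega)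
  -- coefficient growth bound
  have hbnd : ∀ ρ : ℝ, 0 ≤ ρ → ρ < 1 → ∃ C, ∀ n, ‖a n‖ * ρ ^ n ≤ C := by
    intro ρ hρ0 hρ1
    have hmem : (ρ : ℂ) ∈ ball (0:ℂ) 1 := by
      rw [mem_ball_zero_iff, Complex.norm_real, Real.norm_eq_abs, _root_.abs_of_nonneg hρ0]
      exact hρ1
    have hs : Summable (fun n : ℕ => a n * (ρ : ℂ) ^ n) := (hsum _ hmem).summable
    have ht : Tendsto (fun n : ℕ => ‖a n * (ρ : ℂ) ^ n‖) atTop (nhds 0) := by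
      simpa using hs.tendsto_atTop_zero.norm
    obtain ⟨C, hC⟩ := ht.bddAbove_range
    refine ⟨C, fun n => ?_⟩
    have := hC ⟨n, rfl⟩
    simpa [norm_mul, norm_pow, Complex.norm_real, Real.norm_eq_abs, _root_.abs_of_nonneg hρ0] using this
  set b : ℕ → ℂ := fun m => a (m * k) with hb
  set q := FormalMultilinearSeries.ofScalars ℂ b with hqdef
  have hrad : 1 ≤ q.radius := by
    apply aux_radius
    intro ρ hρ0 hρ1
    set σ : ℝ := ρ ^ ((k : ℝ)⁻¹) with hσ
    have hσ0 : 0 ≤ σ := Real.rpow_nonneg hρ0 _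
    have hσk : σ ^ k = ρ := by
      rw [hσ, ← Real.rpow_natCast (ρ ^ ((k : ℝ)⁻¹)) k, ← Real.rpow_mul hρ0,
        inv_mul_cancel₀ hk0, Real.rpow_one]
    obtain ⟨C, hC⟩ := hbnd σ hσ0 (by
      rcases eq_or_lt_of_le hρ0 with h | h
      · rw [hσ, ← h, Real.zero_rpow (by positivity)]; norm_num
      · exact Real.rpow_lt_one hρ0 hρ1 (by positivity))
    refine ⟨C, fun m => ?_⟩
    have : ρ ^ m = σ ^ (m * k) := by rw [mul_comm, pow_mul, hσk]
    rw [this]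
    exact hC (m * k)
  have hradpos : 0 < q.radius := lt_of_lt_of_le (by norm_num) hrad
  have hq : HasFPowerSeriesOnBall q.sum q 0 1 :=
    (q.hasFPowerSeriesOnBall hradpos).mono one_pos hrad
  set h : ℂ → ℂ := q.sum with hhdef
  have hdiff : DifferentiableOn ℂ h (ball (0:ℂ) 1) := by
    have := hq.differentiableOn
    rwa [eball_one] at this
  have hsum_h : ∀ y : ℂ, ‖y‖ < 1 → HasSum (fun m => b m * y ^ m) (h y) := by
    intro y hy
    have hy' : y ∈ Metric.eball (0:ℂ) 1 := by
      rw [eball_one]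
      exact mem_ball_zero_iff.2 hy
    have := hq.hasSum hy'
    rw [zero_add] at this
    have heq : (fun m => q m fun _ => y) = fun m => b m * y ^ m := by
      funext m
      rw [hqdef, FormalMultilinearSeries.ofScalars_apply_eq, smul_eq_mul]
    rwa [heq] at this
  -- root of unity
  set ω : ℂ := Complex.exp ((2 * Real.pi / k : ℝ) * Complex.I) with hω
  have hω_abs : ‖ω‖ = 1 := Complex.norm_exp_ofReal_mul_I _
  have hωk : ω ^ k = 1 := by
    rw [hω, ← Complex.exp_nat_mul]
    have : (k : ℂ) * ((2 * Real.pi / k : ℝ) * Complex.I) = 2 * Real.pi * Complex.I := by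
      push_cast
      field_simp
    rw [this, Complex.exp_two_pi_mul_I]
  have hων : ∀ n : ℕ, ¬ (k ∣ n) → ω ^ n ≠ 1 := by
    intro n hn h1
    rw [hω, ← Complex.exp_nat_mul, Complex.exp_eq_one_iff] at h1
    obtain ⟨m, hm⟩ := h1
    have key : (n : ℂ) = (m : ℂ) * (k : ℂ) := by
      have h2π : (2 * (Real.pi : ℂ) * Complex.I) ≠ 0 := Complex.two_pi_I_ne_zero
      push_cast at hm
      field_simp [hkC] at hm
      apply mul_right_cancel₀ h2π
      linear_combination (2 * (Real.pi : ℂ) * Complex.I) * hm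
    have keyZ : (n : ℤ) = m * (k : ℤ) := by exact_mod_cast key
    exact hn (Int.natCast_dvd_natCast.mp ⟨m, by rw [keyZ]; ring⟩)
  -- averaging identity gives |h| < 1 on the ball
  have hball_j : ∀ (ζ : ℂ), ‖ζ‖ < 1 → ∀ j : ℕ, (ω ^ j * ζ) ∈ ball (0:ℂ) 1 := by
    intro ζ hζ j
    rw [mem_ball_zero_iff, norm_mul, norm_pow, hω_abs, one_pow, one_mul]
    exact hζ
  have havg : ∀ (ζ : ℂ), ‖ζ‖ < 1 → ‖h (ζ ^ k)‖ < 1 := by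
    intro ζ hζ
    have hS : HasSum (fun n : ℕ => ∑ j ∈ Finset.range k, a n * (ω ^ j * ζ) ^ n)
        (∑ j ∈ Finset.range k, f (ω ^ j * ζ)) :=
      hasSum_sum fun j _ => hsum _ (hball_j ζ hζ j)
    have hfun : (fun n : ℕ => ∑ j ∈ Finset.range k, a n * (ω ^ j * ζ) ^ n)
        = fun n : ℕ => if k ∣ n then (k : ℂ) * (a n * ζ ^ n) else 0 := by
      funext n
      have hterm : ∀ j : ℕ, a n * (ω ^ j * ζ) ^ n = (a n * ζ ^ n) * (ω ^ n) ^ j := by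
        intro j
        rw [mul_pow, ← pow_mul, mul_comm j n, pow_mul]
        ring
      rw [Finset.sum_congr rfl fun j _ => hterm j, ← Finset.mul_sum]
      by_cases hdvd : k ∣ n
      · obtain ⟨m, rfl⟩ := hdvd
        have hω1 : ω ^ (k * m) = 1 := by rw [pow_mul, hωk, one_pow]
        rw [if_pos ⟨m, rfl⟩, hω1]
        simp [mul_comm]
      · rw [if_neg hdvd, geom_sum_eq (hων n hdvd)]
        have : (ω ^ n) ^ k = 1 := by rw [← pow_mul, mul_comm n k, pow_mul, hωk, one_pow]
        rw [this, sub_self, zero_div, mul_zero]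
    rw [hfun] at hS
    -- the h-side
    have hζk : ‖ζ ^ k‖ < 1 := by
      rw [norm_pow]
      exact pow_lt_one₀ (norm_nonneg ζ) hζ (by omega)
    have hh := (hsum_h (ζ ^ k) hζk).mul_left (k : ℂ)
    have hcomp : ((fun n : ℕ => if k ∣ n then (k : ℂ) * (a n * ζ ^ n) else 0) ∘ (fun m => m * k))
        = fun m : ℕ => (k : ℂ) * (b m * (ζ ^ k) ^ m) := by
      funext m
      simp only [Function.comp_apply]
      rw [if_pos (dvd_mul_left k m)]
      show (k : ℂ) * (a (m * k) * ζ ^ (m * k)) = (k : ℂ) * (a (m * k) * (ζ ^ k) ^ m)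
      rw [← pow_mul, mul_comm k m]
    have hinj : Function.Injective (fun m : ℕ => m * k) :=
      fun x y hxy => by
        have : x * k = y * k := hxy
        exact Nat.eq_of_mul_eq_mul_right (by omega) this
    have hsupp : ∀ n ∉ Set.range (fun m : ℕ => m * k),
        (if k ∣ n then (k : ℂ) * (a n * ζ ^ n) else 0) = 0 := by
      intro n hn
      rw [if_neg]
      intro ⟨m, hm⟩
      exact hn ⟨m, by rw [hm, mul_comm]⟩
    have hS2 : HasSum (fun n : ℕ => if k ∣ n then (k : ℂ) * (a n * ζ ^ n) else 0)
        ((k : ℂ) * h (ζ ^ k)) := by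
      rw [← hinj.hasSum_iff hsupp, hcomp]
      exact hh
    have hEq : (k : ℂ) * h (ζ ^ k) = ∑ j ∈ Finset.range k, f (ω ^ j * ζ) := hS2.unique hS
    -- strict bound
    have hlt : ‖∑ j ∈ Finset.range k, f (ω ^ j * ζ)‖ < k := by
      calc ‖∑ j ∈ Finset.range k, f (ω ^ j * ζ)‖
          ≤ ∑ j ∈ Finset.range k, ‖f (ω ^ j * ζ)‖ := by
            simpa using norm_sum_le (Finset.range k) (fun j => f (ω ^ j * ζ))
        _ < ∑ j ∈ Finset.range k, 1 := by
            apply Finset.sum_lt_sum_of_nonempty ⟨0, Finset.mem_range.2 (by omega)⟩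
            intro j _
            exact hbound _ (hball_j ζ hζ j)
        _ = k := by simp
    have : (k : ℝ) * ‖h (ζ ^ k)‖ < (k : ℝ) * 1 := by
      have habsk : ‖(k : ℂ) * h (ζ ^ k)‖ = (k : ℝ) * ‖h (ζ ^ k)‖ := by
        rw [norm_mul, Complex.norm_natCast]
      rw [mul_one]
      rw [← habsk, hEq]
      exact hlt
    exact lt_of_mul_lt_mul_left this (le_of_lt hkpos)
  -- h maps the ball into the ball
  have hmaps : MapsTo h (ball (0:ℂ) 1) (ball (0:ℂ) 1) := by
    intro w hw
    obtain ⟨ζ, hζk⟩ := IsAlgClosed.exists_pow_nat_eq w (n := k) (by omega)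
    have hζ : ‖ζ‖ < 1 := by
      have : ‖ζ‖ ^ k < 1 := by
        rw [← norm_pow, hζk]
        exact mem_ball_zero_iff.1 hw
      by_contra hcon
      push_neg at hcon
      exact absurd this (not_lt.2 (one_le_pow₀ hcon))
    rw [← hζk]
    exact mem_ball_zero_iff.2 (havg ζ hζ)
  -- values at 0
  have h0 : h 0 = a 0 := by
    show FormalMultilinearSeries.ofScalarsSum b 0 = a 0
    rw [FormalMultilinearSeries.ofScalarsSum_zero, smul_eq_mul, mul_one, hb]
    simp
  have hder : deriv h 0 = a k := by
    rw [hq.hasFPowerSeriesAt.deriv, hqdef, FormalMultilinearSeries.ofScalars_apply_eq,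
      smul_eq_mul, hb]
    simp
  calc ‖a k‖ = ‖deriv h 0‖ := by rw [hder]
    _ ≤ 1 - ‖h 0‖ ^ 2 := sp_deriv hdiff hmaps
    _ = 1 - ‖a 0‖ ^ 2 := by rw [h0]

private lemma quad_bound {x A r t : ℝ} (hx0 : 0 ≤ x) (hx1 : x < 1) (hA0 : 0 ≤ A) (hA1 : A < 1)
    (hr0 : 0 ≤ r) (hr1 : r < 1) (ht : t ≤ A * x)
    (key2 : x ^ 2 + A ^ 2 - 2 * t ≤ r ^ 2 * (1 + A ^ 2 * x ^ 2 - 2 * t)) :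
    x * (1 + A * r) ≤ A + r := by
  by_contra hcon
  push_neg at hcon
  have hAx : A * x < 1 := by nlinarith [mul_le_of_le_one_left hx0 hA1.le]
  have h1pos : 0 < (1 + A * r) * x - (A + r) := by nlinarith [hcon]
  have h2pos : 0 < (1 - A * r) * x - (A - r) := by
    nlinarith [h1pos, mul_nonneg hr0 (by linarith : (0:ℝ) ≤ 1 - A * x)]
  have hppos : 0 < ((1 + A * r) * x - (A + r)) * ((1 - A * r) * x - (A - r)) :=
    mul_pos h1pos h2pos
  have h1r2 : (0:ℝ) ≤ 1 - r ^ 2 := by nlinarith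
  have htr : t * (1 - r ^ 2) ≤ A * x * (1 - r ^ 2) := mul_le_mul_of_nonneg_right ht h1r2
  nlinarith [key2, htr, hppos]

private lemma final_bound {x S A r : ℝ} (hx0 : 0 ≤ x) (hS0 : 0 ≤ S) (hA0 : 0 ≤ A)
    (hA1 : A < 1) (hr0 : 0 ≤ r) (hr1 : r < 1) (hkey : r ^ 2 + 4 * r - 1 ≤ 0)
    (hx : x * (1 + A * r) ≤ A + r) (hS : S * (1 - r) ≤ (1 - A ^ 2) * r) :
    x + S ≤ 1 := by
  have h1r : (0:ℝ) < 1 - r := by linarith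
  have h1Ar : (0:ℝ) < 1 + A * r := by nlinarith
  nlinarith [mul_le_mul_of_nonneg_right hx h1r.le,
    mul_le_mul_of_nonneg_right hS h1Ar.le, hkey, mul_nonneg hA0 hr0,
    mul_nonneg (mul_nonneg hA0 hr0) hr0, sq_nonneg (1 - A), mul_nonneg hS0 hr0,
    mul_nonneg (mul_nonneg hA0 hA0) hr0, mul_nonneg hx0 hr0,
    mul_nonneg (mul_nonneg hA0 hA0) (mul_nonneg hr0 hr0)]

/-- The Bohr–Rogosinski radius for `N = 1` is `√5 - 2`: if `f` is analytic on the unit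
disk with `|f| < 1`, then `|f(z)| + ∑_{k=1}^∞ |a_k| r^k ≤ 1` whenever `|z| = r ≤ √5 - 2`. -/
theorem bohr_rogosinski_radius_one (f : ℂ → ℂ) (a : ℕ → ℂ)
    (hf : AnalyticOn ℂ f (ball (0:ℂ) 1))
    (hsum : ∀ z ∈ ball (0:ℂ) 1, HasSum (fun k : ℕ => a k * z ^ k) (f z))
    (hbound : ∀ z ∈ ball (0:ℂ) 1, ‖f z‖ < 1)
    (r : ℝ) (hr : r ≤ Real.sqrt 5 - 2)
    (z : ℂ) (hz : ‖z‖ = r) :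
    ‖f z‖ + ∑' k : ℕ, ‖a (k + 1)‖ * r ^ (k + 1) ≤ 1 := by
  have hr0 : 0 ≤ r := hz ▸ norm_nonneg z
  have hs5 : Real.sqrt 5 < 3 := by
    nlinarith [Real.sq_sqrt (by norm_num : (0:ℝ) ≤ 5), Real.sqrt_nonneg 5]
  have hr1 : r < 1 := by linarith
  have hkey : r ^ 2 + 4 * r - 1 ≤ 0 := by
    nlinarith [Real.sq_sqrt (by norm_num : (0:ℝ) ≤ 5), Real.sqrt_nonneg 5]
  have hzball : z ∈ ball (0:ℂ) 1 := mem_ball_zero_iff.2 (by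
    rw [hz]; exact hr1)
  have h0ball : (0:ℂ) ∈ ball (0:ℂ) 1 := mem_ball_self one_pos
  -- f 0 = a 0
  have hf0 : f 0 = a 0 := by
    have h1 := hsum 0 h0ball
    have h2 := hasSum_single (f := fun n : ℕ => a n * (0:ℂ) ^ n) 0
      (fun b hb => by simp [zero_pow hb])
    have := h1.unique h2
    simpa using this
  set A : ℝ := ‖a 0‖ with hA
  have hA0 : 0 ≤ A := norm_nonneg _
  have hA1 : A < 1 := by rw [hA, ← hf0]; exact hbound 0 h0ball
  set x : ℝ := ‖f z‖ with hx
  have hx0 : 0 ≤ x := norm_nonneg _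
  have hx1 : x < 1 := hbound z hzball
  have hdf : DifferentiableOn ℂ f (ball (0:ℂ) 1) := hf.differentiableOn
  have hmf : MapsTo f (ball (0:ℂ) 1) (ball (0:ℂ) 1) := fun ζ hζ =>
    mem_ball_zero_iff.2 (hbound ζ hζ)
  -- Schwarz–Pick value bound: x * (1 + A*r) ≤ A + r
  have hsp := sp_value hdf hmf hzball
  rw [hz] at hsp
  set w : ℂ := f 0 with hw
  have hwA : ‖w‖ = A := by rw [hf0]
  have hxval : x * (1 + A * r) ≤ A + r := by
    have key2 : Complex.normSq (f z - w) ≤ r ^ 2 * Complex.normSq (1 - (starRingEnd ℂ) w * f z) := by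
      rw [← Complex.sq_norm, ← Complex.sq_norm]
      calc ‖f z - w‖ ^ 2 ≤ (r * ‖1 - (starRingEnd ℂ) w * f z‖) ^ 2 := by
            apply pow_le_pow_left₀ (norm_nonneg _) hsp
        _ = r ^ 2 * ‖1 - (starRingEnd ℂ) w * f z‖ ^ 2 := by ring
    have e1 : Complex.normSq (f z - w) =
        ((f z).re - w.re) ^ 2 + ((f z).im - w.im) ^ 2 := by
      simp [Complex.normSq_apply, Complex.sub_re, Complex.sub_im]; ring
    have e2 : Complex.normSq (1 - (starRingEnd ℂ) w * f z) =
        (1 - (w.re * (f z).re + w.im * (f z).im)) ^ 2 +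
          (w.re * (f z).im - w.im * (f z).re) ^ 2 := by
      simp [Complex.normSq_apply, Complex.sub_re, Complex.sub_im, Complex.mul_re,
        Complex.mul_im, Complex.one_re, Complex.one_im, Complex.conj_re, Complex.conj_im]
      ring
    rw [e1, e2] at key2
    have hxa : x ^ 2 = (f z).re ^ 2 + (f z).im ^ 2 := by
      rw [hx, Complex.sq_norm, Complex.normSq_apply]; ring
    have hwa : A ^ 2 = w.re ^ 2 + w.im ^ 2 := by
      rw [← hwA, Complex.sq_norm, Complex.normSq_apply]; ring
    have ht : |w.re * (f z).re + w.im * (f z).im| ≤ A * x := by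
      have hre : ((starRingEnd ℂ) w * f z).re = w.re * (f z).re + w.im * (f z).im := by
        simp [Complex.mul_re, Complex.conj_re, Complex.conj_im]
      calc |w.re * (f z).re + w.im * (f z).im| = |((starRingEnd ℂ) w * f z).re| := by rw [hre]
        _ ≤ ‖(starRingEnd ℂ) w * f z‖ := Complex.abs_re_le_norm _
        _ = A * x := by rw [norm_mul, Complex.norm_conj, ← hwA, hx]
    set t : ℝ := w.re * (f z).re + w.im * (f z).im with htdef
    have ht' : t ≤ A * x := le_of_abs_le ht
    have e3 : ((f z).re - w.re) ^ 2 + ((f z).im - w.im) ^ 2 = x ^ 2 + A ^ 2 - 2 * t := by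
      rw [hxa, hwa, htdef]; ring
    have e4 : (1 - t) ^ 2 + (w.re * (f z).im - w.im * (f z).re) ^ 2
        = 1 + A ^ 2 * x ^ 2 - 2 * t := by
      rw [hxa, hwa, htdef]; ring
    rw [e3, e4] at key2
    exact quad_bound hx0 hx1 hA0 hA1 hr0 hr1 ht' key2
  -- sum bound
  set S : ℝ := ∑' k : ℕ, ‖a (k + 1)‖ * r ^ (k + 1) with hSdef
  have hterm : ∀ k : ℕ, ‖a (k + 1)‖ * r ^ (k + 1) ≤ (1 - A ^ 2) * r ^ (k + 1) := by
    intro k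
    exact mul_le_mul_of_nonneg_right (wiener hsum hbound (k + 1) (by omega)) (by positivity)
  have hgeom0 : Summable (fun k : ℕ => r ^ (k + 1)) :=
    ((summable_geometric_of_lt_one hr0 hr1).mul_left r).congr
      (fun k => by rw [pow_succ]; ring)
  have hgeom : Summable (fun k : ℕ => (1 - A ^ 2) * r ^ (k + 1)) := hgeom0.mul_left _
  have hsummS : Summable (fun k : ℕ => ‖a (k + 1)‖ * r ^ (k + 1)) :=
    Summable.of_nonneg_of_le (fun k => by positivity) hterm hgeom
  have hS0 : 0 ≤ S := tsum_nonneg (fun k => by positivity)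
  have hS_le : S ≤ (1 - A ^ 2) * (r * (1 - r)⁻¹) := by
    have h1 : S ≤ ∑' k : ℕ, (1 - A ^ 2) * r ^ (k + 1) := Summable.tsum_le_tsum hterm hsummS hgeom
    have h2 : ∑' k : ℕ, (1 - A ^ 2) * r ^ (k + 1) = (1 - A ^ 2) * (r * (1 - r)⁻¹) := by
      rw [tsum_mul_left]
      congr 1
      calc ∑' k : ℕ, r ^ (k + 1) = ∑' k : ℕ, r * r ^ k := by
            apply tsum_congr; intro k; rw [pow_succ]; ring
        _ = r * ∑' k : ℕ, r ^ k := tsum_mul_left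
        _ = r * (1 - r)⁻¹ := by rw [tsum_geometric_of_lt_one hr0 hr1]
    linarith [h1, h2.le]
  have hS' : S * (1 - r) ≤ (1 - A ^ 2) * r := by
    have h1r : (0:ℝ) < 1 - r := by linarith
    rw [← le_div_iff₀ h1r]
    calc S ≤ (1 - A ^ 2) * (r * (1 - r)⁻¹) := hS_le
      _ = (1 - A ^ 2) * r / (1 - r) := by field_simp
  -- final arithmetic
  exact final_bound hx0 hS0 hA0 hA1 hr0 hr1 hkey hxval hS'
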